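/- Let Σ be a finite alphabet, v ∉ Σ, and let e be a minimal idempotent of δL(Σ). Then M = {p ∈ δL(Σ ∪ {v}) : θ̃_s(p) = e for all s ∈ Σ} is a nonempty closed subsemigroup of δL(Σ ∪ {v}), and every minimal idempotent of M is a minimal idempotent of δL(Σ ∪ {v}). -/

import Mathlib

open scoped Classical

/-- Located words over alphabet `τ`, as functions `ℕ → Option τ`. -/
abbrev Word (τ : Type*) := ℕ → Option τ

def wDom {τ : Type*} (f : Word τ) : Set ℕ := {n | f n ≠ none}

def IsWord {τ : Type*} (f : Word τ) : Prop := (wDom f).Finite ∧ (wDom f).Nonempty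

/-- The union of two located words. -/
def wUnion {τ : Type*} (f g : Word τ) : Word τ := fun n => (f n).elim (g n) some

/-- The partial semigroup operation `⊎` on located words: defined exactly for
located words with disjoint domains. -/
noncomputable def wOp {τ : Type*} (f g : Word τ) : Option (Word τ) :=
  if IsWord f ∧ IsWord g ∧ Disjoint (wDom f) (wDom g) then some (wUnion f g) else none

/-- `φ(x) = {y : x ⊎ y is defined}`. -/
def phi {τ : Type*} (x : Word τ) : Set (Word τ) := {y | (wOp x y).isSome}

/-- `x⁻¹A = {y ∈ φ(x) : x ⊎ y ∈ A}`. -/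
def invImg {τ : Type*} (x : Word τ) (A : Set (Word τ)) : Set (Word τ) :=
  {y | ∃ z ∈ A, wOp x y = some z}

/-- The sets of the ultrafilter product `p·q = {A : {x : x⁻¹A ∈ q} ∈ p}`. -/
def mulSets {τ : Type*} (p q : Ultrafilter (Word τ)) : Set (Set (Word τ)) :=
  {A | {x | invImg x A ∈ q} ∈ p}

/-- `r` is the product `p·q` in `δL(τ)`. -/
def IsProd {τ : Type*} (p q r : Ultrafilter (Word τ)) : Prop :=
  ∀ A : Set (Word τ), A ∈ r ↔ A ∈ mulSets p q

/-- `δL(τ) ⊆ βL(τ)`: ultrafilters containing `φ(x)` for every located word `x`. -/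
def delta (τ : Type*) : Set (Ultrafilter (Word τ)) :=
  {p | ∀ x : Word τ, IsWord x → phi x ∈ p}

/-- `q` is an idempotent: `q·q = q`. -/
def IsIdem {τ : Type*} (q : Ultrafilter (Word τ)) : Prop := IsProd q q q

/-- `e ≤ f` iff `e·f = f·e = e`. -/
def uLe {τ : Type*} (e f : Ultrafilter (Word τ)) : Prop :=
  IsProd e f e ∧ IsProd f e e

/-- The alphabet `Σ ∪ {v}`; the variable `v` is `Sum.inr ()`. -/
abbrev VLetter (σ : Type*) := σ ⊕ Unit

def vLet {σ : Type*} : VLetter σ := Sum.inr ()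

/-- The variable `v` occurs in `f`. -/
def vOccurs {σ : Type*} (f : Word (VLetter σ)) : Prop := ∃ n, f n = some vLet

/-- The substitution map `θ_s`: replace every occurrence of `v` by `s`. -/
def theta {σ : Type*} (s : σ) (f : Word (VLetter σ)) : Word σ :=
  fun n => (f n).map (fun a => Sum.elim id (fun _ => s) a)

-- AUX
lemma mem_phi {τ : Type*} {x y : Word τ} :
    y ∈ phi x ↔ IsWord x ∧ IsWord y ∧ Disjoint (wDom x) (wDom y) := by
  by_cases h : IsWord x ∧ IsWord y ∧ Disjoint (wDom x) (wDom y) <;> simp [phi, wOp, h]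

lemma wDom_wUnion {τ : Type*} (f g : Word τ) : wDom (wUnion f g) = wDom f ∪ wDom g := by
  ext n; cases h : f n <;> simp [wDom, wUnion, h]

lemma isWord_wUnion {τ : Type*} {f g : Word τ} (hf : IsWord f) (hg : IsWord g) :
    IsWord (wUnion f g) := by
  refine ⟨?_, ?_⟩ <;> rw [wDom_wUnion]
  · exact hf.1.union hg.1
  · exact hf.2.mono Set.subset_union_left

section MapLemmas
variable {τ τ' : Type*} (m : Word τ → Word τ')
  (hdom : ∀ f, wDom (m f) = wDom f)
  (hun : ∀ f g, m (wUnion f g) = wUnion (m f) (m g))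

include hdom

lemma isWord_map (f : Word τ) : IsWord (m f) ↔ IsWord f := by
  unfold IsWord; rw [hdom]

include hun

lemma wOp_map (f g : Word τ) : wOp (m f) (m g) = (wOp f g).map m := by
  unfold wOp
  by_cases h : IsWord f ∧ IsWord g ∧ Disjoint (wDom f) (wDom g)
  · rw [if_pos h, if_pos, Option.map_some, hun]
    exact ⟨(isWord_map m hdom f).2 h.1, (isWord_map m hdom g).2 h.2.1, by
      rw [hdom, hdom]; exact h.2.2⟩
  · rw [if_neg h, if_neg, Option.map_none]
    intro hc
    exact h ⟨(isWord_map m hdom f).1 hc.1, (isWord_map m hdom g).1 hc.2.1, by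
      rw [← hdom f, ← hdom g]; exact hc.2.2⟩

lemma invImg_map (x : Word τ) (A : Set (Word τ')) :
    m ⁻¹' invImg (m x) A = invImg x (m ⁻¹' A) := by
  ext y
  simp only [Set.mem_preimage, invImg, Set.mem_setOf_eq, wOp_map m hdom hun]
  cases h : wOp x y with
  | none => simp
  | some z => simp

lemma isProd_map {p q r : Ultrafilter (Word τ)} (h : IsProd p q r) :
    IsProd (p.map m) (q.map m) (r.map m) := by
  intro A
  rw [Ultrafilter.mem_map, h]
  simp only [mulSets, Set.mem_setOf_eq, Ultrafilter.mem_map]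
  have h2 : m ⁻¹' {u | m ⁻¹' invImg u A ∈ q} = {x | invImg x (m ⁻¹' A) ∈ q} := by
    ext x
    simp only [Set.mem_preimage, Set.mem_setOf_eq]
    rw [invImg_map m hdom hun]
  rw [← h2]

omit hun

lemma preimage_phi (x' : Word τ') (x : Word τ) (hd : wDom x = wDom x') :
    m ⁻¹' phi x' = phi x := by
  have hw : IsWord x ↔ IsWord x' := by unfold IsWord; rw [hd]
  ext y
  simp only [Set.mem_preimage, mem_phi, hdom, hd, hw, isWord_map m hdom]

lemma map_mem_delta
    (hsurj : ∀ x' : Word τ', IsWord x' → ∃ x : Word τ, wDom x = wDom x')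
    {f : Ultrafilter (Word τ)} (hf : f ∈ delta τ) : f.map m ∈ delta τ' := by
  intro x' hx'
  obtain ⟨x, hd⟩ := hsurj x' hx'
  rw [Ultrafilter.mem_map, preimage_phi m hdom x' x hd]
  exact hf x (by unfold IsWord; rw [hd]; exact hx')

end MapLemmas

lemma isProd_unique {τ : Type*} {p q r1 r2 : Ultrafilter (Word τ)}
    (h1 : IsProd p q r1) (h2 : IsProd p q r2) : r1 = r2 := by
  apply Ultrafilter.coe_injective
  apply Filter.ext
  intro A
  rw [Ultrafilter.mem_coe, Ultrafilter.mem_coe, h1, h2]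

lemma ultra_eq {α : Type*} {u v : Ultrafilter α} (h : ∀ A ∈ v, A ∈ u) : u = v :=
  Ultrafilter.coe_le_coe.1 (fun A hA => h A hA)

-- theta / iota
def iotaW {σ : Type*} (f : Word σ) : Word (VLetter σ) := fun n => (f n).map Sum.inl

lemma wDom_theta {σ : Type*} (s : σ) (f : Word (VLetter σ)) : wDom (theta s f) = wDom f := by
  ext n; simp [wDom, theta]

lemma theta_wUnion {σ : Type*} (s : σ) (f g : Word (VLetter σ)) :
    theta s (wUnion f g) = wUnion (theta s f) (theta s g) := by
  funext n; cases h : f n <;> simp [theta, wUnion, h]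

lemma wDom_iotaW {σ : Type*} (f : Word σ) : wDom (iotaW f) = wDom f := by
  ext n; simp [wDom, iotaW]

lemma iotaW_wUnion {σ : Type*} (f g : Word σ) :
    iotaW (wUnion f g) = wUnion (iotaW f) (iotaW g) := by
  funext n; cases h : f n <;> simp [iotaW, wUnion, h]

lemma theta_iotaW {σ : Type*} (s : σ) (f : Word σ) : theta s (iotaW f) = f := by
  funext n; cases h : f n <;> simp [theta, iotaW, h]

/-- Given a minimal idempotent `e` of `δL(Σ)`, the set
`M = {p ∈ δL(Σ ∪ {v}) : θ̃_s(p) = e for all s ∈ Σ}` (where `θ̃_s` is the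
continuous extension `Ultrafilter.map (θ_s)`) is a nonempty closed
subsemigroup of `δL(Σ ∪ {v})`, and every minimal idempotent of `M` is a
minimal idempotent of `δL(Σ ∪ {v})`. -/
theorem M_closed_subsemigroup_minimal {σ : Type} [Fintype σ] [Nonempty σ]
    (e : Ultrafilter (Word σ)) (he : e ∈ delta σ) (heIdem : IsIdem e)
    (heMin : ∀ f ∈ delta σ, IsIdem f → uLe f e → f = e) :
    let M : Set (Ultrafilter (Word (VLetter σ))) :=
      {p | p ∈ delta (VLetter σ) ∧ ∀ s : σ, Ultrafilter.map (theta s) p = e}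
    M.Nonempty ∧ IsClosed M ∧
      (∀ p ∈ M, ∀ q ∈ M, ∀ r : Ultrafilter (Word (VLetter σ)),
        IsProd p q r → r ∈ M) ∧
      (∀ q ∈ M, IsIdem q → (∀ f ∈ M, IsIdem f → uLe f q → f = q) →
        q ∈ delta (VLetter σ) ∧ IsIdem q ∧
          ∀ f ∈ delta (VLetter σ), IsIdem f → uLe f q → f = q) := by
  intro M
  obtain ⟨s₀⟩ := ‹Nonempty σ›
  have hθd := fun (s : σ) => wDom_theta (σ := σ) s
  have hθu := fun (s : σ) => theta_wUnion (σ := σ) s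
  refine ⟨?_, ?_, ?_, ?_⟩
  · -- Nonempty
    refine ⟨e.map iotaW, ?_, fun s => ?_⟩
    · exact map_mem_delta iotaW wDom_iotaW
        (fun x' hx' => ⟨theta s₀ x', wDom_theta s₀ x'⟩) he
    · rw [Ultrafilter.map_map]
      have : theta s ∘ iotaW = id := funext fun f => theta_iotaW s f
      rw [this, Ultrafilter.map_id]
  · -- Closed
    have hMeq : M = (⋂ x ∈ {x : Word (VLetter σ) | IsWord x},
        {p : Ultrafilter (Word (VLetter σ)) | phi x ∈ p}) ∩
        ⋂ (s : σ), ⋂ A ∈ {A : Set (Word σ) | A ∈ e},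
          {p : Ultrafilter (Word (VLetter σ)) | theta s ⁻¹' A ∈ p} := by
      ext p
      simp only [M, Set.mem_inter_iff, Set.mem_iInter, Set.mem_setOf_eq]
      constructor
      · rintro ⟨hd, hm⟩
        refine ⟨fun x hx => hd x hx, fun s A hA => ?_⟩
        rw [← Ultrafilter.mem_map, hm s]; exact hA
      · rintro ⟨hd, hm⟩
        refine ⟨hd, fun s => ?_⟩
        exact ultra_eq fun A hA => (Ultrafilter.mem_map).2 (hm s A hA)
    rw [hMeq]
    refine IsClosed.inter ?_ ?_
    · exact isClosed_biInter fun x _ => ultrafilter_isClosed_basic _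
    · exact isClosed_iInter fun s => isClosed_biInter fun A _ =>
        ultrafilter_isClosed_basic _
  · -- Subsemigroup
    rintro p ⟨hpd, hpm⟩ q ⟨hqd, hqm⟩ r hr
    constructor
    · intro x hx
      rw [hr (phi x)]
      refine p.mem_of_superset (hpd x hx) fun y hy => ?_
      obtain ⟨hwx, hwy, hdisj⟩ := mem_phi.1 hy
      have hwxy : IsWord (wUnion x y) := isWord_wUnion hwx hwy
      refine q.mem_of_superset (hqd _ hwxy) fun z hz => ?_
      obtain ⟨_, hwz, hdz⟩ := mem_phi.1 hz
      rw [wDom_wUnion] at hdz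
      have hdxz : Disjoint (wDom x) (wDom z) := (Set.disjoint_union_left.1 hdz).1
      have hdyz : Disjoint (wDom y) (wDom z) := (Set.disjoint_union_left.1 hdz).2
      refine ⟨wUnion y z, ?_, ?_⟩
      · rw [mem_phi, wDom_wUnion]
        exact ⟨hwx, isWord_wUnion hwy hwz,
          Set.disjoint_union_right.2 ⟨hdisj, hdxz⟩⟩
      · rw [wOp, if_pos ⟨hwy, hwz, hdyz⟩]
    · intro s
      have h1 := isProd_map (theta s) (hθd s) (hθu s) hr
      rw [hpm s, hqm s] at h1
      exact isProd_unique h1 heIdem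
  · -- Minimality
    rintro q ⟨hqd, hqm⟩ hqI hqMin
    refine ⟨hqd, hqI, fun f hfd hfI hfle => ?_⟩
    have hfM : f ∈ M := by
      refine ⟨hfd, fun s => ?_⟩
      have hfd' : (f.map (theta s)) ∈ delta σ :=
        map_mem_delta (theta s) (hθd s)
          (fun x' hx' => ⟨iotaW x', wDom_iotaW x'⟩) hfd
      have hfI' : IsIdem (f.map (theta s)) := isProd_map (theta s) (hθd s) (hθu s) hfI
      have h1 := isProd_map (theta s) (hθd s) (hθu s) hfle.1
      have h2 := isProd_map (theta s) (hθd s) (hθu s) hfle.2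
      rw [hqm s] at h1 h2
      exact heMin _ hfd' hfI' ⟨h1, h2⟩
    exact hqMin f hfM hfI hfle
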